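/- Let a, b, c be real with c > a + b and c not a non-positive integer. Then the hypergeometric series F(a,b,c;1) = Σ_{n≥0} (a)_n (b)_n / ((c)_n n!) converges and equals Γ(c)Γ(c-a-b)/(Γ(c-a)Γ(c-b)) (Gauss's summation theorem). -/

import Mathlib

open Real Filter Finset Topology


noncomputable def hT (a b c : ℝ) (k : ℕ) : ℝ :=
  ((ascPochhammer ℝ k).eval a * (ascPochhammer ℝ k).eval b)
      / ((ascPochhammer ℝ k).eval c * (k.factorial : ℝ))

lemma ascEval_prod (x : ℝ) (n : ℕ) :
    (ascPochhammer ℝ n).eval x = ∏ j ∈ Finset.range n, (x + j) := by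
  induction n with
  | zero => simp
  | succ n ih => rw [ascPochhammer_succ_eval, ih, Finset.prod_range_succ]

lemma ascEval_pos {x : ℝ} (hx : 0 < x) (n : ℕ) : 0 < (ascPochhammer ℝ n).eval x := by
  rw [ascEval_prod]
  exact Finset.prod_pos fun j _ => by positivity

lemma ascEval_ne_zero {c : ℝ} (hc : ∀ n : ℕ, c ≠ -(n : ℝ)) (n : ℕ) :
    (ascPochhammer ℝ n).eval c ≠ 0 := by
  rw [ascEval_prod]
  refine Finset.prod_ne_zero_iff.2 fun j _ => ?_
  have := hc j
  intro h
  exact this (by linarith)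

lemma add_nat_ne_zero {c : ℝ} (hc : ∀ n : ℕ, c ≠ -(n : ℝ)) (n : ℕ) : c + n ≠ 0 := by
  have := hc n; intro h; exact this (by linarith)

lemma hc_shift {c : ℝ} (hc : ∀ n : ℕ, c ≠ -(n : ℝ)) (m : ℕ) :
    ∀ n : ℕ, c + m ≠ -(n : ℝ) := by
  intro n h
  have := hc (n + m)
  push_cast at this
  exact this (by linarith)

lemma hT_zero (a b c : ℝ) : hT a b c 0 = 1 := by simp [hT]

lemma hT_succ (a b : ℝ) {c : ℝ} (hc : ∀ n : ℕ, c ≠ -(n : ℝ)) (k : ℕ) :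
    hT a b c (k + 1) = hT a b c k * ((a + k) * (b + k) / ((c + k) * (k + 1))) := by
  have h1 : (ascPochhammer ℝ k).eval c ≠ 0 := ascEval_ne_zero hc k
  have h2 : c + k ≠ 0 := add_nat_ne_zero hc k
  have h3 : (k.factorial : ℝ) ≠ 0 := Nat.cast_ne_zero.2 k.factorial_ne_zero
  simp only [hT, ascPochhammer_succ_eval, Nat.factorial_succ]
  push_cast
  field_simp


lemma hT_abs_succ (a b : ℝ) {c : ℝ} (hc : ∀ n : ℕ, c ≠ -(n : ℝ)) {k : ℕ}
    (hck : 0 < c + k) :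
    |hT a b c (k + 1)| = |hT a b c k| * (|a + k| * |b + k| / ((c + k) * (k + 1))) := by
  rw [hT_succ a b hc k, abs_mul, abs_div, abs_mul, abs_mul]
  rw [abs_of_pos hck, abs_of_pos (by positivity : (0:ℝ) < (k:ℝ) + 1)]

lemma hT_main (a b : ℝ) {c : ℝ} (hr : 0 < c - a - b) (hc : ∀ n : ℕ, c ≠ -(n : ℝ)) :
    Summable (fun k => |hT a b c k|) ∧
      Tendsto (fun k : ℕ => (k : ℝ) * |hT a b c k|) atTop (𝓝 0) := by
  set r := c - a - b with hrdef
  obtain ⟨N, hN⟩ := exists_nat_gt (max (max (|a|+1) (|b|+1)) (max (|c|+1) (c + 2*|a*b|/r)))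
  have hNa : |a| + 1 ≤ N := le_of_lt (lt_of_le_of_lt (by simp) hN)
  have hNb : |b| + 1 ≤ N := le_of_lt (lt_of_le_of_lt (by simp) hN)
  have hNc : |c| + 1 ≤ N := le_of_lt (lt_of_le_of_lt (by simp) hN)
  have hNr : c + 2*|a*b|/r ≤ N := le_of_lt (lt_of_le_of_lt (by simp) hN)
  set w : ℕ → ℝ := fun k => (k : ℝ) * |hT a b c k| with hw
  have hw0 : ∀ k, 0 ≤ w k := fun k => by positivity
  have key : ∀ k, N ≤ k → w (k + 1) + (r/2) * |hT a b c k| ≤ w k := by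
    intro k hk
    have hkR : (N : ℝ) ≤ k := Nat.cast_le.2 hk
    have hak : 0 < a + k := by have := abs_le.1 (le_refl |a|); nlinarith [neg_abs_le a]
    have hbk : 0 < b + k := by nlinarith [neg_abs_le b]
    have hck : 0 < c + k := by nlinarith [neg_abs_le c]
    have habs := hT_abs_succ a b hc hck
    rw [abs_of_pos hak, abs_of_pos hbk] at habs
    have hTnn : 0 ≤ |hT a b c k| := abs_nonneg _
    have hineq : (a + k) * (b + k) ≤ (k - r/2) * (c + k) := by
      have h1 : c + 2*|a*b|/r ≤ k := le_trans hNr hkR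
      have h2 : a * b ≤ |a*b| := le_abs_self _
      have h3 : 2*|a*b|/r ≤ (k:ℝ) - c := by linarith
      have h4 : r * (2*|a*b|/r) ≤ r * ((k:ℝ) - c) := by
        exact mul_le_mul_of_nonneg_left h3 (le_of_lt hr)
      have h5 : r * (2*|a*b|/r) = 2*|a*b| := by field_simp
      nlinarith
    have : w (k+1) = |hT a b c k| * ((a + k) * (b + k) / (c + k)) := by
      rw [hw]; push_cast; rw [habs]; field_simp
    have goal : |hT a b c k| * ((a + k) * (b + k) / (c + k)) + r/2 * |hT a b c k|
        ≤ (k:ℝ) * |hT a b c k| := by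
      calc |hT a b c k| * ((a + k) * (b + k) / (c + k)) + r/2 * |hT a b c k|
          ≤ |hT a b c k| * ((k - r/2) * (c+k) / (c + k)) + r/2 * |hT a b c k| := by
            gcongr
        _ = (k:ℝ) * |hT a b c k| := by field_simp; ring
    rw [this]
    exact goal
  have sum_bd : ∀ n : ℕ, (∑ i ∈ range n, |hT a b c (N + i)|) * (r/2) ≤ w N - w (N + n) := by
    intro n
    induction n with
    | zero => simp
    | succ n ih =>
      rw [Finset.sum_range_succ, add_mul]
      have := key (N + n) (Nat.le_add_right _ _)
      have e : N + (n+1) = (N + n) + 1 := by omega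
      rw [e]
      nlinarith [this]
  have sum_bd' : ∀ n : ℕ, ∑ i ∈ range n, |hT a b c (N + i)| ≤ w N * (2/r) := by
    intro n
    have h1 := sum_bd n
    have h2 := hw0 (N + n)
    have : (∑ i ∈ range n, |hT a b c (N + i)|) * (r/2) ≤ w N := by linarith
    rw [← le_div_iff₀ (by positivity : (0:ℝ) < r/2)] at this
    calc _ ≤ w N / (r/2) := this
      _ = w N * (2/r) := by field_simp
  have hsum : Summable (fun k => |hT a b c k|) := by
    rw [← summable_nat_add_iff N]
    exact summable_of_sum_range_le (fun n => abs_nonneg _) (fun n => by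
      simpa [add_comm] using sum_bd' n)
  refine ⟨hsum, ?_⟩
  -- w is antitone from N on
  have anti : Antitone (fun n => w (n + N)) := by
    apply antitone_nat_of_succ_le
    intro n
    have := key (n + N) (Nat.le_add_left _ _)
    have h2 : 0 ≤ (r/2) * |hT a b c (n + N)| := by positivity
    calc w (n + 1 + N) = w ((n + N) + 1) := by ring_nf
      _ ≤ w (n + N) := by linarith
  have bdd : BddBelow (Set.range fun n => w (n + N)) := ⟨0, by rintro x ⟨n, rfl⟩; exact hw0 _⟩
  have hconv := tendsto_atTop_ciInf anti bdd
  set L := ⨅ n, w (n + N) with hL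
  have hL0 : 0 ≤ L := le_ciInf fun n => hw0 _
  have hLle : ∀ n, L ≤ w (n + N) := fun n => ciInf_le bdd n
  have hLzero : L = 0 := by
    by_contra hne
    have hLpos : 0 < L := lt_of_le_of_ne hL0 (Ne.symm hne)
    have hshift : Summable (fun n : ℕ => |hT a b c (n + N)|) :=
      (summable_nat_add_iff (f := fun k => |hT a b c k|) N).2 hsum
    have hcomp : Summable (fun n : ℕ => L / ((n : ℝ) + N)) := by
      apply Summable.of_nonneg_of_le (fun n => div_nonneg hL0 (by positivity)) (fun n => ?_) hshift
      have h1 : L ≤ w (n + N) := hLle n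
      have h2 : (0:ℝ) < (n:ℝ) + N := by have := abs_nonneg a; have := Nat.cast_nonneg (α := ℝ) n; linarith
      rw [div_le_iff₀ h2]
      calc L ≤ w (n + N) := h1
        _ = |hT a b c (n + N)| * ((n:ℝ) + N) := by simp only [hw]; push_cast; ring
    have hharm : Summable (fun n : ℕ => (((n + N : ℕ) : ℝ))⁻¹) := by
      have := hcomp.mul_left L⁻¹
      refine this.congr fun n => ?_
      push_cast
      field_simp
    exact Real.not_summable_natCast_inv
      ((summable_nat_add_iff (f := fun n : ℕ => ((n : ℝ))⁻¹) N).1 hharm)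
  rw [hLzero] at hconv
  rw [← tendsto_add_atTop_iff_nat N]
  exact hconv.congr fun n => rfl


lemma hc_succ {c : ℝ} (hc : ∀ n : ℕ, c ≠ -(n : ℝ)) : ∀ n : ℕ, c + 1 ≠ -(n : ℝ) := by
  intro n h
  have := hc (n + 1)
  push_cast at this
  exact this (by linarith)

lemma asc_shift_eval (c : ℝ) (k : ℕ) :
    c * (ascPochhammer ℝ k).eval (c + 1) = (ascPochhammer ℝ k).eval c * (c + k) := by
  have h1 : (ascPochhammer ℝ (k+1)).eval c = (ascPochhammer ℝ k).eval c * (c + k) :=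
    ascPochhammer_succ_eval k c
  have h2 : (ascPochhammer ℝ (k+1)).eval c = c * (ascPochhammer ℝ k).eval (c + 1) := by
    rw [ascPochhammer_succ_left]
    simp [Polynomial.eval_comp]
  rw [← h1, h2]

lemma hT_shift_c (a b : ℝ) {c : ℝ} (hc : ∀ n : ℕ, c ≠ -(n : ℝ)) (k : ℕ) :
    hT a b (c + 1) k = hT a b c k * (c / (c + k)) := by
  have hc0 : c ≠ 0 := by have := hc 0; simpa using this
  have hck : c + k ≠ 0 := add_nat_ne_zero hc k
  have hCk : (ascPochhammer ℝ k).eval c ≠ 0 := ascEval_ne_zero hc k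
  have hC1 : (ascPochhammer ℝ k).eval (c+1) ≠ 0 := ascEval_ne_zero (hc_succ hc) k
  have hk : (k.factorial : ℝ) ≠ 0 := Nat.cast_ne_zero.2 k.factorial_ne_zero
  have key := asc_shift_eval c k
  simp only [hT]
  field_simp
  linear_combination (-((ascPochhammer ℝ k).eval a * (ascPochhammer ℝ k).eval b)) * key

lemma rel_step (a b : ℝ) {c : ℝ} (hr : 0 < c - a - b) (hc : ∀ n : ℕ, c ≠ -(n : ℝ)) :
    c * (c - a - b) * ∑' k, hT a b c k = (c - a) * (c - b) * ∑' k, hT a b (c+1) k := by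
  have hc0 : c ≠ 0 := by have := hc 0; simpa using this
  have hsc : Summable (hT a b c) := summable_abs_iff.1 (hT_main a b hr hc).1
  have hsc1 : Summable (hT a b (c+1)) :=
    summable_abs_iff.1 (hT_main a b (by linarith) (hc_succ hc)).1
  set U : ℕ → ℝ := fun k => (k : ℝ) * hT a b c k with hU
  have id1 : ∀ k : ℕ, c * (c-a-b) * hT a b c k - (c-a)*(c-b) * hT a b (c+1) k
      = -c * (U (k+1) - U k) := by
    intro k
    have hck : c + k ≠ 0 := add_nat_ne_zero hc k
    rw [hT_shift_c a b hc k]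
    simp only [hU]
    rw [hT_succ a b hc k]
    push_cast
    field_simp
    ring
  set g : ℕ → ℝ := fun k => c * (c-a-b) * hT a b c k - (c-a)*(c-b) * hT a b (c+1) k with hg
  have hsg : Summable g := ((hsc.mul_left _).sub (hsc1.mul_left _))
  have hpart : ∀ n : ℕ, ∑ k ∈ range n, g k = -c * U n := by
    intro n
    have : ∀ k ∈ range n, g k = -c * U (k+1) - (-c * U k) := by
      intro k _
      show c * (c-a-b) * hT a b c k - (c-a)*(c-b) * hT a b (c+1) k = _
      rw [id1 k]; ring
    rw [Finset.sum_congr rfl this, Finset.sum_range_sub (fun k => -c * U k)]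
    simp [hU]
  have hU0 : Tendsto U atTop (𝓝 0) := by
    apply squeeze_zero_norm (fun n => ?_) (hT_main a b hr hc).2
    simp only [hU, Real.norm_eq_abs, abs_mul, Nat.abs_cast]
    exact le_refl _
  have hlim : Tendsto (fun n => ∑ k ∈ range n, g k) atTop (𝓝 0) := by
    simp only [hpart]
    have := hU0.const_mul (-c)
    simpa using this
  have hzero : ∑' k, g k = 0 :=
    ((hsg.hasSum_iff_tendsto_nat).2 hlim).tsum_eq
  have hexp : ∑' k, g k = c * (c-a-b) * ∑' k, hT a b c k
      - (c-a)*(c-b) * ∑' k, hT a b (c+1) k := by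
    simp only [hg]
    rw [Summable.tsum_sub (hsc.mul_left _) (hsc1.mul_left _), tsum_mul_left, tsum_mul_left]
  rw [hexp] at hzero
  linarith


lemma iterate_rel (a b : ℝ) {c : ℝ} (hr : 0 < c - a - b) (hc : ∀ n : ℕ, c ≠ -(n : ℝ)) :
    ∀ m : ℕ, (∑' k, hT a b c k) *
        ((ascPochhammer ℝ m).eval c * (ascPochhammer ℝ m).eval (c - a - b))
      = ((ascPochhammer ℝ m).eval (c - a) * (ascPochhammer ℝ m).eval (c - b)) *
        ∑' k, hT a b (c + m) k := by
  intro m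
  induction m with
  | zero => simp
  | succ m ih =>
    have hrm : 0 < (c + m) - a - b := by
      have : (0:ℝ) ≤ m := Nat.cast_nonneg m
      linarith
    have REL := rel_step a b hrm (hc_shift hc m)
    have ecast : ((m + 1 : ℕ) : ℝ) = (m : ℝ) + 1 := by push_cast; ring
    rw [ecast, show c + ((m:ℝ) + 1) = c + (m:ℝ) + 1 from by ring]
    simp only [ascPochhammer_succ_eval]
    linear_combination ((c + m) * (c - a - b + m)) * ih
      + ((ascPochhammer ℝ m).eval (c-a) * (ascPochhammer ℝ m).eval (c-b)) * REL

lemma asc_one_eval (x : ℝ) : (ascPochhammer ℝ 1).eval x = x := by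
  simp [ascPochhammer_one]

lemma tail_tendsto (a b : ℝ) {c : ℝ} (hr : 0 < c - a - b) (hc : ∀ n : ℕ, c ≠ -(n : ℝ)) :
    Tendsto (fun m : ℕ => ∑' k, hT a b (c + m) k) atTop (𝓝 1) := by
  obtain ⟨m₀, hm₀⟩ := exists_nat_gt (-c)
  have hc₀pos : 0 < c + m₀ := by linarith
  have hrm : ∀ m : ℕ, 0 < (c + m) - a - b := fun m => by
    have : (0:ℝ) ≤ m := Nat.cast_nonneg m
    linarith
  have hcm : ∀ m : ℕ, ∀ n : ℕ, c + m ≠ -(n : ℝ) := fun m => hc_shift hc m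
  have hsum : ∀ m : ℕ, Summable (fun k => |hT a b (c + m) k|) :=
    fun m => (hT_main a b (hrm m) (hcm m)).1
  -- the key domination bound
  have bound : ∀ m : ℕ, m₀ ≤ m → ∀ k : ℕ,
      |hT a b (c + m) (k+1)| ≤ ((c + m₀) / (c + m)) * |hT a b (c + m₀) (k+1)| := by
    intro m hm k
    have hmR : (m₀ : ℝ) ≤ m := Nat.cast_le.2 hm
    have hcmpos : 0 < c + m := by linarith
    induction k with
    | zero =>
      have h1 : ∀ m' : ℕ, hT a b (c + m') 1 = a * b / (c + m') := by
        intro m'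
        rw [show (1:ℕ) = 0 + 1 from rfl, hT_succ a b (hcm m') 0, hT_zero]
        norm_num
      rw [h1, h1, abs_div, abs_div, abs_of_pos hcmpos, abs_of_pos hc₀pos]
      rw [div_mul_div_comm, div_le_div_iff₀ (by positivity) (by positivity)]
      ring_nf
      nlinarith [abs_nonneg (a*b)]
    | succ k ih =>
      have hck : (0:ℝ) < c + m + (k+1) := by positivity
      have hck0 : (0:ℝ) < c + m₀ + (k+1) := by positivity
      have e1 := hT_abs_succ a b (hcm m) (k := k+1) (by push_cast at hck ⊢; linarith)
      have e2 := hT_abs_succ a b (hcm m₀) (k := k+1) (by push_cast at hck0 ⊢; linarith)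
      rw [e1, e2]
      have hle : |hT a b (c + m) (k+1)| ≤ (c + m₀)/(c + m) * |hT a b (c + m₀) (k+1)| := ih
      push_cast
      calc |hT a b (c + ↑m) (k + 1)| * (|a + (↑k+1)| * |b + (↑k+1)| / ((c + ↑m + (↑k+1)) * (↑k + 1 + 1)))
          ≤ ((c + m₀)/(c + m) * |hT a b (c + m₀) (k+1)|) *
            (|a + (↑k+1)| * |b + (↑k+1)| / ((c + ↑m₀ + (↑k+1)) * (↑k + 1 + 1))) := by
            apply mul_le_mul hle ?_ (by positivity) (by positivity)
            have hd : c + (m₀:ℝ) + ((k:ℝ)+1) ≤ c + (m:ℝ) + ((k:ℝ)+1) := by linarith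
            gcongr
        _ = (c + m₀)/(c + m) * (|hT a b (c + m₀) (k+1)| *
            (|a + (↑k+1)| * |b + (↑k+1)| / ((c + ↑m₀ + (↑k+1)) * (↑k + 1 + 1)))) := by ring
  -- conclude
  set K := ∑' k, |hT a b (c + m₀) (k+1)| with hK
  have hK0 : 0 ≤ K := tsum_nonneg fun k => abs_nonneg _
  have hdiff : ∀ m : ℕ, m₀ ≤ m →
      |(∑' k, hT a b (c + m) k) - 1| ≤ ((c + m₀) * K) / (c + m) := by
    intro m hm
    have hmR : (m₀ : ℝ) ≤ m := Nat.cast_le.2 hm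
    have hcmpos : 0 < c + m := by linarith
    have hs : Summable (hT a b (c + m)) := summable_abs_iff.1 (hsum m)
    have hsplit : ∑' k, hT a b (c + m) k = 1 + ∑' k, hT a b (c + m) (k+1) := by
      rw [Summable.tsum_eq_zero_add hs, hT_zero]
    rw [hsplit]
    have h1 : |1 + (∑' k, hT a b (c + m) (k+1)) - 1| = |∑' k, hT a b (c + m) (k+1)| := by
      congr 1; ring
    rw [h1]
    have hs1 : Summable (fun k => |hT a b (c + m) (k+1)|) :=
      (summable_nat_add_iff (f := fun k => |hT a b (c + m) k|) 1).2 (hsum m)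
    have hs0 : Summable (fun k => |hT a b (c + m₀) (k+1)|) :=
      (summable_nat_add_iff (f := fun k => |hT a b (c + m₀) k|) 1).2 (hsum m₀)
    calc |∑' k, hT a b (c + m) (k+1)| ≤ ∑' k, |hT a b (c + m) (k+1)| := by
          have := norm_tsum_le_tsum_norm (f := fun k => hT a b (c+m) (k+1))
            (by simpa using hs1)
          simpa using this
      _ ≤ ∑' k, ((c + m₀)/(c + m)) * |hT a b (c + m₀) (k+1)| :=
          Summable.tsum_le_tsum (bound m hm) hs1 (hs0.mul_left _)
      _ = ((c + m₀)/(c + m)) * K := by rw [tsum_mul_left]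
      _ = ((c + m₀) * K) / (c + m) := by ring
  have hlim0 : Tendsto (fun m : ℕ => ((c + m₀) * K) / (c + m)) atTop (𝓝 0) := by
    apply Tendsto.div_atTop tendsto_const_nhds
    apply tendsto_atTop_add_const_left
    exact tendsto_natCast_atTop_atTop
  have : Tendsto (fun m : ℕ => (∑' k, hT a b (c + m) k) - 1) atTop (𝓝 0) := by
    apply squeeze_zero_norm' _ hlim0
    filter_upwards [eventually_ge_atTop m₀] with m hm
    simpa using hdiff m hm
  have := this.add_const 1
  simpa using this


lemma ratio_one (α β : ℝ) : Tendsto (fun m : ℕ => (α + m) / (β + m)) atTop (𝓝 1) := by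
  have h1 : Tendsto (fun m : ℕ => β + (m : ℝ)) atTop atTop :=
    tendsto_atTop_add_const_left _ β tendsto_natCast_atTop_atTop
  have h2 : Tendsto (fun m : ℕ => (α - β) / (β + m)) atTop (𝓝 0) :=
    Tendsto.div_atTop tendsto_const_nhds h1
  have h3 := h2.const_add 1
  rw [add_zero] at h3
  apply h3.congr'
  filter_upwards [h1.eventually_gt_atTop 0] with m hm
  have : β + (m:ℝ) ≠ 0 := ne_of_gt hm
  field_simp
  ring

lemma gammaSeq_ne_zero_and_eval {s : ℝ} (hs : ∀ n : ℕ, s ≠ -(n : ℝ)) {m : ℕ} (hm : 0 < m) :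
    Real.GammaSeq s m ≠ 0 ∧ (ascPochhammer ℝ m).eval s
      = (m : ℝ) ^ s * (m.factorial : ℝ) / (Real.GammaSeq s m * (s + m)) := by
  have hmpos : (0:ℝ) < m := Nat.cast_pos.2 hm
  have hprod : ∏ j ∈ Finset.range (m+1), (s + j)
      = (ascPochhammer ℝ m).eval s * (s + m) := by
    rw [Finset.prod_range_succ, ascEval_prod]
  have hE : (ascPochhammer ℝ m).eval s ≠ 0 := ascEval_ne_zero hs m
  have hsm : s + m ≠ 0 := add_nat_ne_zero hs m
  have hfac : (m.factorial : ℝ) ≠ 0 := Nat.cast_ne_zero.2 m.factorial_ne_zero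
  have hpow : (m:ℝ) ^ s ≠ 0 := (Real.rpow_pos_of_pos hmpos s).ne'
  have hGdef : Real.GammaSeq s m = (m:ℝ) ^ s * m.factorial /
      ((ascPochhammer ℝ m).eval s * (s + m)) := by
    rw [Real.GammaSeq, hprod]
  have hG : Real.GammaSeq s m ≠ 0 := by
    rw [hGdef]
    exact div_ne_zero (mul_ne_zero hpow hfac) (mul_ne_zero hE hsm)
  refine ⟨hG, ?_⟩
  rw [hGdef]
  field_simp

lemma Q_tendsto (a : ℝ) (b : ℝ) {c : ℝ} (hr : 0 < c - a - b)
    (hc : ∀ n : ℕ, c ≠ -(n : ℝ)) (hca : ∀ n : ℕ, c - a ≠ -(n : ℝ))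
    (hcb : ∀ n : ℕ, c - b ≠ -(n : ℝ)) :
    Tendsto (fun m : ℕ =>
        ((ascPochhammer ℝ m).eval (c - a) * (ascPochhammer ℝ m).eval (c - b)) /
        ((ascPochhammer ℝ m).eval c * (ascPochhammer ℝ m).eval (c - a - b)))
      atTop (𝓝 (Gamma c * Gamma (c - a - b) / (Gamma (c - a) * Gamma (c - b)))) := by
  have hcab : ∀ n : ℕ, c - a - b ≠ -(n : ℝ) := by
    intro n h
    have : (0:ℝ) ≤ n := Nat.cast_nonneg n
    nlinarith [hr]
  have hlim : Tendsto (fun m : ℕ =>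
      (Real.GammaSeq c m * Real.GammaSeq (c-a-b) m) /
        (Real.GammaSeq (c-a) m * Real.GammaSeq (c-b) m) *
      ((c + m) / ((c-a) + m) * (((c-a-b) + m) / ((c-b) + m))))
      atTop (𝓝 (Gamma c * Gamma (c - a - b) / (Gamma (c - a) * Gamma (c - b)) * (1 * 1))) := by
    apply Tendsto.mul
    · exact Tendsto.div
        ((Real.GammaSeq_tendsto_Gamma c).mul (Real.GammaSeq_tendsto_Gamma (c-a-b)))
        ((Real.GammaSeq_tendsto_Gamma (c-a)).mul (Real.GammaSeq_tendsto_Gamma (c-b)))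
        (mul_ne_zero (Real.Gamma_ne_zero hca) (Real.Gamma_ne_zero hcb))
    · exact (ratio_one c (c-a)).mul (ratio_one (c-a-b) (c-b))
  rw [mul_one, mul_one] at hlim
  apply hlim.congr'
  filter_upwards [eventually_ge_atTop 1] with m hm
  have hm' : 0 < m := hm
  obtain ⟨hGc, hEc⟩ := gammaSeq_ne_zero_and_eval hc hm'
  obtain ⟨hGca, hEca⟩ := gammaSeq_ne_zero_and_eval hca hm'
  obtain ⟨hGcb, hEcb⟩ := gammaSeq_ne_zero_and_eval hcb hm'
  obtain ⟨hGcab, hEcab⟩ := gammaSeq_ne_zero_and_eval hcab hm'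
  have hmpos : (0:ℝ) < m := Nat.cast_pos.2 hm'
  have hfac : (m.factorial : ℝ) ≠ 0 := Nat.cast_ne_zero.2 m.factorial_ne_zero
  have hsmc : c + (m:ℝ) ≠ 0 := add_nat_ne_zero hc m
  have hsmca : c - a + (m:ℝ) ≠ 0 := add_nat_ne_zero hca m
  have hsmcb : c - b + (m:ℝ) ≠ 0 := add_nat_ne_zero hcb m
  have hsmcab : c - a - b + (m:ℝ) ≠ 0 := add_nat_ne_zero hcab m
  have hpa : (m:ℝ) ^ a ≠ 0 := (Real.rpow_pos_of_pos hmpos a).ne'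
  have hpb : (m:ℝ) ^ b ≠ 0 := (Real.rpow_pos_of_pos hmpos b).ne'
  have hpc : (m:ℝ) ^ c ≠ 0 := (Real.rpow_pos_of_pos hmpos c).ne'
  rw [hEc, hEca, hEcb, hEcab,
    show c - a - b = c - a - b from rfl,
    Real.rpow_sub hmpos (c-a) b, Real.rpow_sub hmpos c a, Real.rpow_sub hmpos c b]
  field_simp


/-- The Gauss hypergeometric function, defined by its power series. -/
noncomputable def hypF (a b c x : ℝ) : ℝ :=
  ∑' n : ℕ, ((ascPochhammer ℝ n).eval a * (ascPochhammer ℝ n).eval b)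
      / ((ascPochhammer ℝ n).eval c * (n.factorial : ℝ)) * x ^ n

theorem stmt_6 (a b c : ℝ) (h : c > a + b)
    (hc : ∀ n : ℕ, c ≠ -(n : ℝ)) (hca : ∀ n : ℕ, c - a ≠ -(n : ℝ))
    (hcb : ∀ n : ℕ, c - b ≠ -(n : ℝ)) :
    Summable (fun n : ℕ => ((ascPochhammer ℝ n).eval a * (ascPochhammer ℝ n).eval b)
        / ((ascPochhammer ℝ n).eval c * (n.factorial : ℝ))) ∧
    hypF a b c 1
      = Real.Gamma c * Real.Gamma (c - a - b) / (Real.Gamma (c - a) * Real.Gamma (c - b)) := by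
  have hr : 0 < c - a - b := by linarith
  have hsc : Summable (hT a b c) := summable_abs_iff.1 (hT_main a b hr hc).1
  refine ⟨hsc, ?_⟩
  have hhypF : hypF a b c 1 = ∑' k, hT a b c k := by
    unfold hypF hT
    exact tsum_congr fun n => by rw [one_pow, mul_one]
  rw [hhypF]
  set F : ℝ → ℝ := fun x => ∑' k, hT a b x k with hF
  have hconst : ∀ m : ℕ,
      F c = ((ascPochhammer ℝ m).eval (c - a) * (ascPochhammer ℝ m).eval (c - b)) /
        ((ascPochhammer ℝ m).eval c * (ascPochhammer ℝ m).eval (c - a - b)) * F (c + m) := by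
    intro m
    have hcab : ∀ n : ℕ, c - a - b ≠ -(n : ℝ) := by
      intro n hn
      have : (0:ℝ) ≤ n := Nat.cast_nonneg n
      nlinarith [hr]
    have hEc : (ascPochhammer ℝ m).eval c ≠ 0 := ascEval_ne_zero hc m
    have hEcab : (ascPochhammer ℝ m).eval (c - a - b) ≠ 0 := ascEval_ne_zero hcab m
    have hit := iterate_rel a b hr hc m
    simp only [hF]
    field_simp
    linear_combination hit
  have hlim : Tendsto (fun m : ℕ =>
      ((ascPochhammer ℝ m).eval (c - a) * (ascPochhammer ℝ m).eval (c - b)) /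
        ((ascPochhammer ℝ m).eval c * (ascPochhammer ℝ m).eval (c - a - b)) * F (c + m))
      atTop (𝓝 (Gamma c * Gamma (c - a - b) / (Gamma (c - a) * Gamma (c - b)) * 1)) :=
    (Q_tendsto a b hr hc hca hcb).mul (tail_tendsto a b hr hc)
  rw [mul_one] at hlim
  have hconst' : Tendsto (fun _ : ℕ => F c) atTop
      (𝓝 (Gamma c * Gamma (c - a - b) / (Gamma (c - a) * Gamma (c - b)))) := by
    apply hlim.congr
    intro m
    exact (hconst m).symm
  exact (tendsto_nhds_unique tendsto_const_nhds hconst' : F c = _)
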